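/- A finite graph G has maximum density at most d (every subgraph H with nonempty vertex set satisfies |E(H)| ≤ d·|V(H)|) if and only if there exists an orientation of G in which every vertex has in-degree at most d. -/

import Mathlib

/-- Hakimi's theorem: a finite graph `G` has maximum density at most `d`
(every subgraph with nonempty vertex set has at most `d` times as many edges as vertices)
iff there is an orientation of `G` in which every vertex has in-degree at most `d`. -/
theorem stmt2 {V : Type*} [Fintype V] (G : SimpleGraph V) (d : ℕ) :
    (∀ H : G.Subgraph, H.verts.Nonempty → H.edgeSet.ncard ≤ d * H.verts.ncard) ↔
    ∃ D : V → V → Prop,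
      (∀ u v, G.Adj u v ↔ (D u v ∨ D v u)) ∧
      (∀ u v, D u v → ¬ D v u) ∧
      (∀ v, {u | D u v}.ncard ≤ d) := by
  classical
  constructor
  · intro hH
    -- endpoints of an edge as a Finset
    set ep : Sym2 V → Finset V := fun e => Finset.univ.filter (· ∈ e) with hep
    have mem_ep : ∀ (e : Sym2 V) (v : V), v ∈ ep e ↔ v ∈ e := by
      intro e v; simp [hep]
    set t : G.edgeSet → Finset (V × Fin d) := fun e => ep (e : Sym2 V) ×ˢ Finset.univ with htdef
    have hall : ∀ s : Finset G.edgeSet, s.card ≤ (s.biUnion t).card := by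
      intro s
      -- build the subgraph spanned by the edges in `s`
      set H : G.Subgraph :=
        { verts := {v | ∃ e ∈ s, v ∈ (e : Sym2 V)}
          Adj := fun u v => ∃ e ∈ s, (e : Sym2 V) = s(u, v)
          adj_sub := by
            rintro u v ⟨e, _, he⟩
            have := e.2
            rw [he] at this
            exact this
          edge_vert := by
            rintro u v ⟨e, hes, he⟩
            exact ⟨e, hes, by rw [he]; exact Sym2.mem_mk_left u v⟩
          symm := by
            constructor
            rintro u v ⟨e, hes, he⟩
            exact ⟨e, hes, by rw [he, Sym2.eq_swap]⟩ }
      have hedge : H.edgeSet = (fun e : G.edgeSet => (e : Sym2 V)) '' ↑s := by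
        ext e
        induction e using Sym2.ind with
        | _ u v =>
          simp only [SimpleGraph.Subgraph.mem_edgeSet, Set.mem_image, Finset.mem_coe]
          exact Iff.rfl
      have hverts : H.verts = ↑(s.biUnion fun e => ep (e : Sym2 V)) := by
        ext v
        simp only [Finset.coe_biUnion, Set.mem_iUnion, Finset.mem_coe, mem_ep,
          Set.mem_setOf_eq]
        show (∃ e ∈ s, v ∈ (e : Sym2 V)) ↔ _
        tauto
      have hecard : H.edgeSet.ncard = s.card := by
        rw [hedge, Set.ncard_image_of_injective _ Subtype.coe_injective,
          Set.ncard_coe_finset]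
      have hvcard : H.verts.ncard = (s.biUnion fun e => ep (e : Sym2 V)).card := by
        rw [hverts, Set.ncard_coe_finset]
      have hbiU : s.biUnion t = (s.biUnion fun e => ep (e : Sym2 V)) ×ˢ Finset.univ := by
        ext ⟨v, i⟩
        simp [htdef]
      rcases s.eq_empty_or_nonempty with rfl | hs
      · simp
      · obtain ⟨e, hes⟩ := hs
        have hne : H.verts.Nonempty :=
          ⟨(e : Sym2 V).out.1, e, hes, Sym2.out_fst_mem _⟩
        have := hH H hne
        rw [hecard, hvcard] at this
        rw [hbiU, Finset.card_product, Finset.card_univ, Fintype.card_fin, mul_comm]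
        exact this
    obtain ⟨f, hfinj, hft⟩ :=
      (Finset.all_card_le_biUnion_card_iff_exists_injective t).mp hall
    -- head of the edge {u,v} is v
    refine ⟨fun u v => ∃ h : G.Adj u v, (f ⟨s(u, v), h⟩).1 = v, ?_, ?_, ?_⟩
    · intro u v
      constructor
      · intro h
        have hmem := hft ⟨s(u, v), h⟩
        rw [htdef, Finset.mem_product] at hmem
        have h1 := (mem_ep _ _).mp hmem.1
        rw [Sym2.mem_iff] at h1
        rcases h1 with h1 | h1
        · right
          refine ⟨h.symm, ?_⟩
          have : (⟨s(v, u), h.symm⟩ : G.edgeSet) = ⟨s(u, v), h⟩ := by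
            exact Subtype.ext (Sym2.eq_swap)
          rw [this]; exact h1
        · exact Or.inl ⟨h, h1⟩
      · rintro (⟨h, _⟩ | ⟨h, _⟩)
        · exact h
        · exact h.symm
    · rintro u v ⟨h, hv⟩ ⟨h', hu⟩
      have hne := h.ne
      have : (⟨s(v, u), h'⟩ : G.edgeSet) = ⟨s(u, v), h⟩ := Subtype.ext (Sym2.eq_swap)
      rw [this, hv] at hu
      exact hne hu.symm
    · intro v
      have key : {u | ∃ h : G.Adj u v, (f ⟨s(u, v), h⟩).1 = v}.ncard ≤
          (↑(Finset.range d) : Set ℕ).ncard := by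
        apply Set.ncard_le_ncard_of_injOn
          (fun u => if h : ∃ h : G.Adj u v, (f ⟨s(u, v), h⟩).1 = v
            then ((f ⟨s(u, v), h.choose⟩).2 : ℕ) else 0)
        · intro u hu
          simp only [Set.mem_setOf_eq] at hu
          rw [dif_pos hu]
          simp only [Finset.coe_range, Set.mem_Iio]
          exact (f ⟨s(u, v), hu.choose⟩).2.isLt
        · intro u₁ h₁ u₂ h₂ heq
          simp only [Set.mem_setOf_eq] at h₁ h₂
          dsimp only at heq
          rw [dif_pos h₁, dif_pos h₂] at heq
          have e1 : (f ⟨s(u₁, v), h₁.choose⟩).1 = v := h₁.choose_spec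
          have e2 : (f ⟨s(u₂, v), h₂.choose⟩).1 = v := h₂.choose_spec
          have heq2 : f ⟨s(u₁, v), h₁.choose⟩ = f ⟨s(u₂, v), h₂.choose⟩ := by
            apply Prod.ext
            · rw [e1, e2]
            · exact Fin.val_injective heq
          have := hfinj heq2
          have hsym : s(u₁, v) = s(u₂, v) := congrArg Subtype.val this
          exact (Sym2.congr_left).mp hsym
      rwa [Set.ncard_coe_finset, Finset.card_range] at key
  · rintro ⟨D, hadj, hasym, hdeg⟩ H _
    -- edges with head `v`
    set F : V → Finset (Sym2 V) :=
      fun v => (Finset.univ.filter fun u => D u v).image fun u => s(u, v) with hF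
    have hsub : H.edgeSet.toFinset ⊆ H.verts.toFinset.biUnion F := by
      intro e he
      rw [Set.mem_toFinset] at he
      induction e using Sym2.ind with
      | _ u v =>
        rw [SimpleGraph.Subgraph.mem_edgeSet] at he
        have hg := (hadj u v).mp (he.adj_sub)
        rcases hg with hD | hD
        · refine Finset.mem_biUnion.mpr ⟨v, ?_, ?_⟩
          · rw [Set.mem_toFinset]; exact H.edge_vert he.symm
          · exact Finset.mem_image.mpr ⟨u, by simp [hD], rfl⟩
        · refine Finset.mem_biUnion.mpr ⟨u, ?_, ?_⟩
          · rw [Set.mem_toFinset]; exact H.edge_vert he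
          · exact Finset.mem_image.mpr ⟨v, by simp [hD], Sym2.eq_swap⟩
    have hFcard : ∀ v, (F v).card ≤ d := by
      intro v
      calc (F v).card ≤ (Finset.univ.filter fun u => D u v).card :=
            Finset.card_image_le
        _ = {u | D u v}.ncard := by
            rw [Set.ncard_eq_toFinset_card']
            congr 1
            ext u
            simp
        _ ≤ d := hdeg v
    calc H.edgeSet.ncard = H.edgeSet.toFinset.card := Set.ncard_eq_toFinset_card' _
      _ ≤ (H.verts.toFinset.biUnion F).card := Finset.card_le_card hsub
      _ ≤ ∑ v ∈ H.verts.toFinset, (F v).card := Finset.card_biUnion_le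
      _ ≤ ∑ _v ∈ H.verts.toFinset, d := Finset.sum_le_sum fun v _ => hFcard v
      _ = d * H.verts.ncard := by
          rw [Finset.sum_const, smul_eq_mul, Set.ncard_eq_toFinset_card', mul_comm]
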